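/- Under the same hypotheses (1 < ν < 2, b ≥ a+1, α, β, γ, δ ≥ 0, β ≥ α, ξ > 0), define v(t,s) = u(t,s) - H_{ν-1}(t, s-1). Then v(t,s) ≥ 0 for all integers t ∈ [a, b] and s ∈ [a+1, b] with t ≥ s. -/

import Mathlib

noncomputable def H (μ : ℝ) (t a : ℤ) : ℝ :=
  Real.Gamma ((t : ℝ) - a + μ) / (Real.Gamma ((t : ℝ) - a) * Real.Gamma (μ + 1))

noncomputable def xiBVP (ν : ℝ) (a b : ℤ) (α β γ δ : ℝ) : ℝ :=
  (β - α) * γ + α * γ * H (ν - 1) b a + α * δ * H (ν - 2) b a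

noncomputable def uG (ν : ℝ) (a b : ℤ) (α β γ δ : ℝ) (t s : ℤ) : ℝ :=
  (1 / xiBVP ν a b α β γ δ) *
    (α * γ * H (ν - 1) t a * H (ν - 1) b (s - 1)
      + α * δ * H (ν - 1) t a * H (ν - 2) b (s - 1)
      + (β - α) * γ * H (ν - 1) b (s - 1)
      + (β - α) * δ * H (ν - 2) b (s - 1))

noncomputable def vG (ν : ℝ) (a b : ℤ) (α β γ δ : ℝ) (t s : ℤ) : ℝ :=
  uG ν a b α β γ δ t s - H (ν - 1) t (s - 1)

noncomputable def GG (ν : ℝ) (a b : ℤ) (α β γ δ : ℝ) (t s : ℤ) : ℝ :=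
  if t ≤ s - 1 then uG ν a b α β γ δ t s else vG ν a b α β γ δ t s

noncomputable def Q (μ : ℝ) (n : ℕ) : ℝ := ∏ k ∈ Finset.range n, (1 + μ / (k + 1))

lemma Gamma_prod (μ : ℝ) (hμ : 0 < μ + 1) (n : ℕ) :
    Real.Gamma ((n : ℝ) + 1 + μ) = Real.Gamma (μ + 1) * ∏ k ∈ Finset.range n, ((k : ℝ) + 1 + μ) := by
  induction n with
  | zero => simp [add_comm]
  | succ n ih =>
      rw [Finset.prod_range_succ]
      push_cast
      rw [show (n : ℝ) + 1 + 1 + μ = ((n : ℝ) + 1 + μ) + 1 by ring,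
        Real.Gamma_add_one (by nlinarith [(n.cast_nonneg : (0:ℝ) ≤ n)]), ih]
      ring

lemma fac_prod (n : ℕ) : (n.factorial : ℝ) = ∏ k ∈ Finset.range n, ((k : ℝ) + 1) := by
  induction n with
  | zero => simp
  | succ m ih => rw [Finset.prod_range_succ, ← ih, Nat.factorial_succ]; push_cast; ring

lemma H_eq_Q (μ : ℝ) (hμ : 0 < μ + 1) (a t : ℤ) (n : ℕ) (h : t = a + 1 + n) :
    H μ t a = Q μ n := by
  have hcast : (t : ℝ) - a = (n : ℝ) + 1 := by rw [h]; push_cast; ring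
  have hΓ : Real.Gamma (μ + 1) ≠ 0 := Real.Gamma_ne_zero (by
    intro m
    nlinarith [(m.cast_nonneg : (0:ℝ) ≤ m)])
  have hfac : Real.Gamma ((n : ℝ) + 1) = (n.factorial : ℝ) := by
    exact_mod_cast Real.Gamma_nat_eq_factorial n
  have hD : (0:ℝ) < ∏ k ∈ Finset.range n, ((k : ℝ) + 1) :=
    Finset.prod_pos fun k _ => by positivity
  have hQ : Q μ n = (∏ k ∈ Finset.range n, ((k : ℝ) + 1 + μ)) /
      (∏ k ∈ Finset.range n, ((k : ℝ) + 1)) := by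
    rw [Q, ← Finset.prod_div_distrib]
    refine Finset.prod_congr rfl fun k _ => ?_
    have : (k : ℝ) + 1 ≠ 0 := by positivity
    field_simp
  rw [H, hcast, Gamma_prod μ hμ, hfac, fac_prod, hQ]
  field_simp

lemma Q_factor_pos (μ : ℝ) (hμ : -1 < μ) (k : ℕ) : 0 < 1 + μ / ((k : ℝ) + 1) := by
  have h1 : (0:ℝ) < (k:ℝ) + 1 := by positivity
  have h2 : (0:ℝ) < (k:ℝ) + 1 + μ := by nlinarith [(k.cast_nonneg : (0:ℝ) ≤ k)]
  have : 1 + μ / ((k:ℝ)+1) = ((k:ℝ)+1+μ)/((k:ℝ)+1) := by field_simp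
  rw [this]; positivity

lemma Q_pos (μ : ℝ) (hμ : -1 < μ) (n : ℕ) : 0 < Q μ n :=
  Finset.prod_pos fun k _ => Q_factor_pos μ hμ k

lemma one_le_prod_aux (p : ℕ) (f : ℕ → ℝ) (hf : ∀ k, 1 ≤ f k) :
    1 ≤ ∏ k ∈ Finset.range p, f k :=
  calc (1:ℝ) = ∏ _k ∈ Finset.range p, 1 := by simp
    _ ≤ ∏ k ∈ Finset.range p, f k :=
        Finset.prod_le_prod (fun k _ => zero_le_one) (fun k _ => hf k)

lemma Q_one_le (μ : ℝ) (hμ : 0 ≤ μ) (n : ℕ) : 1 ≤ Q μ n := by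
  rw [Q]
  refine one_le_prod_aux n _ fun k => ?_
  have : (0:ℝ) ≤ μ / ((k:ℝ)+1) := by positivity
  linarith

lemma Q_add (μ : ℝ) (m p : ℕ) :
    Q μ (m + p) = Q μ m * ∏ k ∈ Finset.range p, (1 + μ / ((m : ℝ) + k + 1)) := by
  rw [Q, Q, Finset.prod_range_add]
  congr 1
  exact Finset.prod_congr rfl fun k _ => by push_cast; ring_nf

lemma Q_mono (μ : ℝ) (hμ : 0 ≤ μ) {m n : ℕ} (h : m ≤ n) : Q μ m ≤ Q μ n := by
  obtain ⟨p, rfl⟩ := Nat.exists_eq_add_of_le h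
  rw [Q_add]
  have hQm := (Q_pos μ (by linarith) m).le
  have hT : 1 ≤ ∏ k ∈ Finset.range p, (1 + μ / ((m : ℝ) + k + 1)) := by
    refine one_le_prod_aux p _ fun k => ?_
    have : (0:ℝ) ≤ μ / ((m:ℝ)+k+1) := by positivity
    linarith
  nlinarith

lemma Q_anti (μ : ℝ) (hμ1 : -1 < μ) (hμ2 : μ ≤ 0) {m n : ℕ} (h : m ≤ n) : Q μ n ≤ Q μ m := by
  obtain ⟨p, rfl⟩ := Nat.exists_eq_add_of_le h
  rw [Q_add]
  have hQm := Q_pos μ hμ1 m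
  have hT : ∏ k ∈ Finset.range p, (1 + μ / ((m : ℝ) + k + 1)) ≤ 1 := by
    refine Finset.prod_le_one (fun k _ => ?_) (fun k _ => ?_)
    · have h1 : (0:ℝ) < (m:ℝ) + k + 1 := by positivity
      have h2 : (0:ℝ) < (m:ℝ) + k + 1 + μ := by
        nlinarith [(m.cast_nonneg : (0:ℝ) ≤ m), (k.cast_nonneg : (0:ℝ) ≤ k)]
      have : 1 + μ / ((m:ℝ)+k+1) = ((m:ℝ)+k+1+μ)/((m:ℝ)+k+1) := by field_simp
      rw [this]; positivity
    · have h1 : (0:ℝ) < (m:ℝ) + k + 1 := by positivity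
      have : μ / ((m:ℝ)+k+1) ≤ 0 := div_nonpos_of_nonpos_of_nonneg hμ2 h1.le
      linarith
  nlinarith

lemma Q_ratio (μ : ℝ) (hμ : 0 ≤ μ) {m n : ℕ} (h : m ≤ n) (p : ℕ) :
    Q μ (n + p) * Q μ m ≤ Q μ (m + p) * Q μ n := by
  rw [Q_add, Q_add]
  have hQm := (Q_pos μ (by linarith) m)
  have hQn := (Q_pos μ (by linarith) n)
  have hT : ∏ k ∈ Finset.range p, (1 + μ / ((n : ℝ) + k + 1)) ≤
      ∏ k ∈ Finset.range p, (1 + μ / ((m : ℝ) + k + 1)) := by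
    refine Finset.prod_le_prod (fun k _ => ?_) (fun k _ => ?_)
    · have : (0:ℝ) ≤ μ / ((n:ℝ) + k + 1) := by positivity
      linarith
    · have hmn : (m:ℝ) ≤ (n:ℝ) := by exact_mod_cast h
      gcongr
  have hTn : (0:ℝ) ≤ ∏ k ∈ Finset.range p, (1 + μ / ((n : ℝ) + k + 1)) :=
    Finset.prod_nonneg fun k _ => by positivity
  nlinarith [mul_le_mul_of_nonneg_left hT (mul_nonneg hQm.le hQn.le)]

theorem v_nonneg (ν : ℝ) (hν1 : 1 < ν) (hν2 : ν < 2) (a b : ℤ) (hab : a + 1 ≤ b)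
    (α β γ δ : ℝ) (hα : 0 ≤ α) (hβ : 0 ≤ β) (hγ : 0 ≤ γ) (hδ : 0 ≤ δ)
    (hba : α ≤ β) (hξ : 0 < xiBVP ν a b α β γ δ)
    (t s : ℤ) (hta : a ≤ t) (htb : t ≤ b) (hsa : a + 1 ≤ s) (hsb : s ≤ b)
    (hts : s ≤ t) :
    0 ≤ vG ν a b α β γ δ t s := by
  set p : ℕ := (s - 1 - a).toNat with hp
  set mts : ℕ := (t - s).toNat with hmts
  set mbs : ℕ := (b - s).toNat with hmbs
  have hμ1 : (0:ℝ) < (ν - 1) + 1 := by linarith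
  have hμ2 : (0:ℝ) < (ν - 2) + 1 := by linarith
  have hHta : H (ν-1) t a = Q (ν-1) (mts + p) := H_eq_Q _ hμ1 a t _ (by omega)
  have hHba1 : H (ν-1) b a = Q (ν-1) (mbs + p) := H_eq_Q _ hμ1 a b _ (by omega)
  have hHba2 : H (ν-2) b a = Q (ν-2) (mbs + p) := H_eq_Q _ hμ2 a b _ (by omega)
  have hHts : H (ν-1) t (s-1) = Q (ν-1) mts := H_eq_Q _ hμ1 (s-1) t _ (by omega)
  have hHbs1 : H (ν-1) b (s-1) = Q (ν-1) mbs := H_eq_Q _ hμ1 (s-1) b _ (by omega)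
  have hHbs2 : H (ν-2) b (s-1) = Q (ν-2) mbs := H_eq_Q _ hμ2 (s-1) b _ (by omega)
  have hmm : mts ≤ mbs := by omega
  have hν1' : (0:ℝ) ≤ ν - 1 := by linarith
  have hν2a : (-1:ℝ) < ν - 2 := by linarith
  have hν2b : ν - 2 ≤ 0 := by linarith
  -- key inequalities
  have A1 : Q (ν-1) (mbs + p) * Q (ν-1) mts ≤ Q (ν-1) (mts + p) * Q (ν-1) mbs :=
    Q_ratio (ν-1) hν1' hmm p
  have hQtsQta : Q (ν-1) mts ≤ Q (ν-1) (mts + p) := Q_mono (ν-1) hν1' (Nat.le_add_right _ _)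
  have hQ'baQ'bs : Q (ν-2) (mbs + p) ≤ Q (ν-2) mbs := Q_anti (ν-2) hν2a hν2b (Nat.le_add_right _ _)
  have hQts0 : 0 ≤ Q (ν-1) mts := (Q_pos _ (by linarith) _).le
  have hQ'bs0 : 0 ≤ Q (ν-2) mbs := (Q_pos _ hν2a _).le
  have A2 : Q (ν-2) (mbs + p) * Q (ν-1) mts ≤ Q (ν-1) (mts + p) * Q (ν-2) mbs := by
    calc Q (ν-2) (mbs + p) * Q (ν-1) mts ≤ Q (ν-2) mbs * Q (ν-1) (mts + p) :=
          mul_le_mul hQ'baQ'bs hQtsQta hQts0 hQ'bs0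
      _ = Q (ν-1) (mts + p) * Q (ν-2) mbs := by ring
  have A3 : Q (ν-1) mts ≤ Q (ν-1) mbs := Q_mono (ν-1) hν1' hmm
  -- main bound: ξ * Q ts ≤ numerator
  have hξeq : xiBVP ν a b α β γ δ =
      (β - α) * γ + α * γ * Q (ν-1) (mbs + p) + α * δ * Q (ν-2) (mbs + p) := by
    rw [xiBVP, hHba1, hHba2]
  have hc1 : 0 ≤ α * γ := mul_nonneg hα hγ
  have hc2 : 0 ≤ α * δ := mul_nonneg hα hδ
  have hc3 : 0 ≤ (β - α) * γ := mul_nonneg (by linarith) hγ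
  have hc4 : 0 ≤ (β - α) * δ := mul_nonneg (by linarith) hδ
  have key : xiBVP ν a b α β γ δ * Q (ν-1) mts ≤
      α * γ * Q (ν-1) (mts + p) * Q (ν-1) mbs
      + α * δ * Q (ν-1) (mts + p) * Q (ν-2) mbs
      + (β - α) * γ * Q (ν-1) mbs
      + (β - α) * δ * Q (ν-2) mbs := by
    rw [hξeq]
    nlinarith [mul_le_mul_of_nonneg_left A1 hc1, mul_le_mul_of_nonneg_left A2 hc2,
      mul_le_mul_of_nonneg_left A3 hc3, mul_nonneg hc4 hQ'bs0]
  rw [vG, uG, hHta, hHts, hHbs1, hHbs2, sub_nonneg, one_div, ← div_eq_inv_mul,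
    le_div_iff₀ hξ]
  calc Q (ν-1) mts * xiBVP ν a b α β γ δ = xiBVP ν a b α β γ δ * Q (ν-1) mts := by ring
    _ ≤ _ := key
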